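/- Let X = A_1 × ⋯ × A_m be a Cartesian set over F_q, let 0 ≤ d ≤ m, let 1 ≤ r ≤ Σ_{i=0}^{d} C(m,i), and let M = {x^{α_1},…,x^{α_r}} be a set of r distinct square-free monomials with α_1,…,α_r ∈ S_{≤d}(m). Then there exist polynomials f_1,…,f_r in the F_q-linear span of the square-free monomials {x^α : α ∈ S_{≤d}(m)} such that the leading monomial of f_i with respect to the degree-lexicographic monomial order (with x_1 ≺ x_2 ≺ ⋯ ≺ x_m) is x^{α_i} for each 1 ≤ i ≤ r, and the number of points P ∈ X at which f_1,…,f_r all vanish equals |Δ_X({α_1,…,α_r})|. -/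

import Mathlib

/-- Square-free exponent vectors of total degree `d` in `m` variables. -/
def Sd (m d : ℕ) : Set (Fin m → ℕ) := {a | (∀ i, a i ≤ 1) ∧ ∑ i, a i = d}

/-- Square-free exponent vectors of total degree at most `d` in `m` variables. -/
def Sle (m d : ℕ) : Set (Fin m → ℕ) := {a | (∀ i, a i ≤ 1) ∧ ∑ i, a i ≤ d}

/-- Evaluation code over the Cartesian set `X = A 0 × ⋯ × A (m-1)`, spanned by the
evaluations of the monomials `x^a` for `a ∈ S`. -/
noncomputable def evalCodeX {F : Type*} [Field F] {m : ℕ} (A : Fin m → Finset F)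
    (S : Set (Fin m → ℕ)) :
    Submodule F ({P : Fin m → F // ∀ i, P i ∈ A i} → F) :=
  Submodule.span F ((fun (a : Fin m → ℕ) (P : {P : Fin m → F // ∀ i, P i ∈ A i}) =>
    ∏ i, P.1 i ^ a i) '' S)

open Classical in
/-- Support of a linear code. -/
noncomputable def codeSupp {F ι : Type*} [Field F] [Fintype ι]
    (C : Submodule F (ι → F)) : Finset ι :=
  Finset.univ.filter (fun i => ∃ c ∈ C, c i ≠ 0)

/-- The `r`-th generalized Hamming weight of a linear code: the minimum cardinality of the
support of an `r`-dimensional subcode. -/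
noncomputable def GHW {F ι : Type*} [Field F] [Fintype ι]
    (C : Submodule F (ι → F)) (r : ℕ) : ℕ :=
  sInf {k | ∃ C' : Submodule F (ι → F),
    C' ≤ C ∧ Module.finrank F C' = r ∧ (codeSupp C').card = k}

/-- The footprint box `B_X = {0,…,n_1−1} × ⋯ × {0,…,n_m−1}`. -/
noncomputable def BX {F : Type*} {m : ℕ} (A : Fin m → Finset F) : Finset (Fin m → ℕ) :=
  Fintype.piFinset (fun i => Finset.range (A i).card)

open Classical in
/-- The shadow `∇_X(N)`: elements of `B_X` divisible by some element of `N`. -/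
noncomputable def nablaX {F : Type*} {m : ℕ} (A : Fin m → Finset F)
    (N : Set (Fin m → ℕ)) : Finset (Fin m → ℕ) :=
  (BX A).filter (fun b => ∃ a ∈ N, ∀ i, a i ≤ b i)

open Classical in
/-- The footprint `Δ_X(N) = B_X ∖ ∇_X(N)`. -/
noncomputable def deltaX {F : Type*} {m : ℕ} (A : Fin m → Finset F)
    (N : Set (Fin m → ℕ)) : Finset (Fin m → ℕ) :=
  (BX A).filter (fun b => ¬ ∃ a ∈ N, ∀ i, a i ≤ b i)

/-- The degree-lexicographic order on exponent vectors: `a` is smaller than `b` if it has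
smaller total degree, or equal total degree and `a i < b i` at the first index `i` where
they differ. -/
def degLexLt {m : ℕ} (a b : Fin m → ℕ) : Prop :=
  (∑ i, a i) < ∑ i, b i ∨
    ((∑ i, a i) = ∑ i, b i ∧ ∃ i, (∀ j, j < i → a j = b j) ∧ a i < b i)

/-- `b` is the exponent of the leading monomial of `f` with respect to the
degree-lexicographic order: `x^b` occurs in `f` and every other monomial of `f` is
smaller. -/
def IsLeadingExp {F : Type*} [Field F] {m : ℕ} (f : MvPolynomial (Fin m) F)
    (b : Fin m → ℕ) : Prop :=
  Finsupp.equivFunOnFinite.symm b ∈ f.support ∧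
    ∀ c ∈ f.support, ⇑c ≠ b → degLexLt (⇑c) b

section FPHelpers
open MvPolynomial

variable {F : Type*} [Field F] {m : ℕ}

lemma fp_symm_add_single (b : Fin m → ℕ) (k : Fin m) :
    Finsupp.equivFunOnFinite.symm b + Finsupp.single k 1 =
      Finsupp.equivFunOnFinite.symm (Function.update b k (b k + 1)) := by
  ext j
  simp [Finsupp.single_apply, Function.update]
  rcases eq_or_ne j k with h | h
  · subst h; simp
  · simp [h, Ne.symm h]

lemma fp_span_prod (a : Fin m → F) (s : Finset (Fin m)) :
    (∏ j ∈ s, (X j - C (a j))) ∈ Submodule.span F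
      ((fun b : Fin m → ℕ => monomial (Finsupp.equivFunOnFinite.symm b) (1 : F)) ''
        {b | ∀ j, b j ≤ if j ∈ s then 1 else 0}) := by
  classical
  induction s using Finset.induction_on with
  | empty =>
      rw [Finset.prod_empty]
      have h1 : (1 : MvPolynomial (Fin m) F) =
          monomial (Finsupp.equivFunOnFinite.symm (fun _ => 0)) 1 := by
        have : Finsupp.equivFunOnFinite.symm (fun _ : Fin m => 0) = 0 := by
          ext j; rfl
        rw [this, monomial_zero']; rfl
      rw [h1]
      exact Submodule.subset_span ⟨fun _ => 0, fun j => by simp, rfl⟩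
  | @insert k s hk ih =>
      rw [Finset.prod_insert hk]
      refine Submodule.span_induction ?_ ?_ ?_ ?_ ih
      · rintro p ⟨b, hb, rfl⟩
        have hbk : b k = 0 := by have := hb k; simpa [hk] using this
        have hkey : (Finsupp.single k 1) + Finsupp.equivFunOnFinite.symm b =
            Finsupp.equivFunOnFinite.symm (Function.update b k 1) := by
          rw [add_comm, fp_symm_add_single, hbk]
        have heq : (X k - C (a k)) * monomial (Finsupp.equivFunOnFinite.symm b) (1 : F)
            = monomial (Finsupp.equivFunOnFinite.symm (Function.update b k 1)) 1
              - a k • monomial (Finsupp.equivFunOnFinite.symm b) 1 := by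
          rw [sub_mul, X, monomial_mul, one_mul, C_mul_monomial, mul_one,
            smul_monomial, smul_eq_mul, mul_one, hkey]
        rw [heq]
        refine sub_mem (Submodule.subset_span ⟨_, fun j => ?_, rfl⟩)
          (Submodule.smul_mem _ _ (Submodule.subset_span ⟨b, fun j => ?_, rfl⟩))
        · rcases eq_or_ne j k with h | h
          · subst h; simp [Function.update]
          · have := hb j
            simp only [Function.update, dif_neg h]
            rcases eq_or_ne j k with h2 | h2
            · exact absurd h2 h
            · by_cases hjs : j ∈ s <;> simp_all [Finset.mem_insert]
        · have := hb j
          by_cases hjs : j ∈ s <;> simp_all [Finset.mem_insert]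
      · simp
      · intro p q _ _ hp hq; rw [mul_add]; exact add_mem hp hq
      · intro c p _ hp; rw [mul_smul_comm]; exact Submodule.smul_mem _ _ hp

lemma fp_support_prod (a : Fin m → F) (s : Finset (Fin m)) :
    ∀ c ∈ (∏ j ∈ s, (X j - C (a j))).support, ∀ j, c j ≤ if j ∈ s then 1 else 0 := by
  classical
  induction s using Finset.induction_on with
  | empty =>
      intro c hc j
      rw [Finset.prod_empty] at hc
      have h1 : MvPolynomial.coeff c (1 : MvPolynomial (Fin m) F) ≠ 0 := mem_support_iff.mp hc
      rw [coeff_one] at h1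
      have hc0 : c = 0 := by by_contra h; simp [h, Ne.symm h] at h1
      simp [hc0]
  | @insert k s hk ih =>
      intro c hc j
      rw [Finset.prod_insert hk] at hc
      have : (X k - C (a k)) * (∏ j ∈ s, (X j - C (a j)))
          = X k * (∏ j ∈ s, (X j - C (a j))) - a k • (∏ j ∈ s, (X j - C (a j))) := by
        rw [smul_eq_C_mul, sub_mul]
      rw [this] at hc
      have hc' := MvPolynomial.support_sub _ _ _ hc
      rcases Finset.mem_union.mp hc' with h | h
      · rw [support_X_mul] at h
        obtain ⟨c', hmem, rfl⟩ := Finset.mem_map.mp h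
        have := ih c' hmem j
        simp only [addLeftEmbedding_apply, Finsupp.add_apply, Finsupp.single_apply]
        rcases eq_or_ne k j with h2 | h2
        · subst h2; simp_all [hk]
        · simp only [h2, if_neg]
          by_cases hjs : j ∈ s <;> simp_all [Finset.mem_insert]
      · have := ih c (Finsupp.support_smul h) j
        by_cases hjs : j ∈ s <;> simp_all [Finset.mem_insert]

lemma fp_coeff_top (a : Fin m → F) (s : Finset (Fin m)) :
    MvPolynomial.coeff (Finsupp.equivFunOnFinite.symm (fun j => if j ∈ s then 1 else 0))
      (∏ j ∈ s, (X j - C (a j))) = 1 := by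
  classical
  induction s using Finset.induction_on with
  | empty =>
      have h0 : Finsupp.equivFunOnFinite.symm
          (fun j : Fin m => if j ∈ (∅ : Finset (Fin m)) then 1 else 0) = 0 := by
        ext j; simp
      rw [Finset.prod_empty, h0]
      exact coeff_zero_one
  | @insert k s hk ih =>
      have hkey : Finsupp.equivFunOnFinite.symm
            (fun j : Fin m => if j ∈ insert k s then 1 else 0)
          = Finsupp.single k 1 +
            Finsupp.equivFunOnFinite.symm (fun j : Fin m => if j ∈ s then 1 else 0) := by
        ext j
        simp only [Finsupp.add_apply, Finsupp.single_apply, Finsupp.coe_equivFunOnFinite_symm,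
          Finset.mem_insert]
        rcases eq_or_ne j k with h | h
        · subst h; simp [hk]
        · simp [h, Ne.symm h]
      have hsplit : (X k - C (a k)) * (∏ j ∈ s, (X j - C (a j)))
          = X k * (∏ j ∈ s, (X j - C (a j))) - a k • (∏ j ∈ s, (X j - C (a j))) := by
        rw [smul_eq_C_mul, sub_mul]
      have hzero : MvPolynomial.coeff (Finsupp.single k 1 +
            Finsupp.equivFunOnFinite.symm (fun j : Fin m => if j ∈ s then 1 else 0))
          (∏ j ∈ s, (X j - C (a j))) = 0 := by
        by_contra h
        have hmem := mem_support_iff.mpr h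
        have := fp_support_prod a s _ hmem k
        simp [hk] at this
      rw [Finset.prod_insert hk, hkey, hsplit, coeff_sub, coeff_X_mul, ih, coeff_smul,
        hzero]
      simp

end FPHelpers

/-- Let `X = A_1 × ⋯ × A_m` be a Cartesian set over `F_q`, `0 ≤ d ≤ m`,
`1 ≤ r ≤ Σ_{i=0}^{d} C(m,i)`, and let `α_1, …, α_r ∈ S_{≤d}(m)` be distinct. Then there
are polynomials `f_1, …, f_r` in the linear span of the square-free monomials of degree at
most `d` whose leading monomials (w.r.t. degree-lexicographic order) are `x^{α_1}, …,
x^{α_r}` and whose number of common zeros in `X` equals `|Δ_X({α_1,…,α_r})|`. -/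
theorem exists_polys_with_leading_monomials_and_footprint_zeros
    {F : Type*} [Field F] [Fintype F] [DecidableEq F] {m d r : ℕ}
    (A : Fin m → Finset F)
    (hcard : ∀ i, 2 ≤ (A i).card)
    (hmono : ∀ i j : Fin m, i ≤ j → (A i).card ≤ (A j).card)
    (hdm : d ≤ m) (hr1 : 1 ≤ r)
    (hr2 : r ≤ ∑ i ∈ Finset.range (d + 1), m.choose i)
    (α : Fin r → (Fin m → ℕ)) (hαinj : Function.Injective α)
    (hα : ∀ i, α i ∈ Sle m d) :
    ∃ f : Fin r → MvPolynomial (Fin m) F,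
      (∀ i, f i ∈ Submodule.span F
        ((fun a : Fin m → ℕ =>
          MvPolynomial.monomial (Finsupp.equivFunOnFinite.symm a) (1 : F)) '' Sle m d)) ∧
      (∀ i, IsLeadingExp (f i) (α i)) ∧
      (Finset.univ.filter (fun P : {P : Fin m → F // ∀ i, P i ∈ A i} =>
          ∀ i, MvPolynomial.eval P.1 (f i) = 0)).card
        = (deltaX A (Set.range α)).card := by
  classical
  have hne : ∀ j, (A j).Nonempty := fun j => Finset.card_pos.mp (by have := hcard j; omega)
  have hpos : ∀ j, 0 < (A j).card := fun j => Finset.card_pos.mpr (hne j)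
  set a : Fin m → F := fun j => (hne j).choose with ha_def
  have ha : ∀ j, a j ∈ A j := fun j => (hne j).choose_spec
  let e : ∀ j, {x // x ∈ A j} ≃ Fin (A j).card := fun j =>
    (A j).equivFin.trans (Equiv.swap ((A j).equivFin ⟨a j, ha j⟩) ⟨0, hpos j⟩)
  have he_a : ∀ j, e j ⟨a j, ha j⟩ = ⟨0, hpos j⟩ := fun j => by
    simp [e, Equiv.swap_apply_left]
  set S : Fin r → Finset (Fin m) := fun i => Finset.univ.filter (fun j => α i j = 1)
    with hSdef
  have hind : ∀ i j, (if j ∈ S i then 1 else 0) = α i j := by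
    intro i j
    by_cases h : α i j = 1
    · simp [hSdef, h]
    · have h0 : α i j = 0 := by have := (hα i).1 j; omega
      simp [hSdef, h, h0]
  have hindfun : ∀ i, (fun j => if j ∈ S i then 1 else 0) = α i := fun i =>
    funext (hind i)
  have hcoord : ∀ (P : {P : Fin m → F // ∀ i, P i ∈ A i}) (j : Fin m),
      ((e j ⟨P.1 j, P.2 j⟩ : Fin (A j).card) : ℕ) = 0 ↔ P.1 j = a j := by
    intro P j
    constructor
    · intro h
      have h1 : e j ⟨P.1 j, P.2 j⟩ = ⟨0, hpos j⟩ := Fin.ext h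
      have h2 := (e j).injective (h1.trans (he_a j).symm)
      exact congrArg Subtype.val h2
    · intro h
      have h1 : (⟨P.1 j, P.2 j⟩ : {x // x ∈ A j}) = ⟨a j, ha j⟩ := Subtype.ext h
      rw [h1, he_a]
  refine ⟨fun i => ∏ j ∈ S i, (MvPolynomial.X j - MvPolynomial.C (a j)), ?_, ?_, ?_⟩
  · -- span membership
    intro i
    refine Submodule.span_mono (Set.image_mono ?_) (fp_span_prod a (S i))
    intro b hb
    have hb' : ∀ j, b j ≤ α i j := fun j => by
      have := hb j; rwa [hind] at this
    refine ⟨fun j => le_trans (hb' j) ((hα i).1 j), ?_⟩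
    calc ∑ j, b j ≤ ∑ j, α i j := Finset.sum_le_sum (fun j _ => hb' j)
      _ ≤ d := (hα i).2
  · -- leading exponents
    intro i
    constructor
    · rw [MvPolynomial.mem_support_iff, ← hindfun i]
      rw [fp_coeff_top a (S i)]
      exact one_ne_zero
    · intro c hc hcne
      have hle : ∀ j, c j ≤ α i j := fun j => by
        have := fp_support_prod a (S i) c hc j
        rwa [hind] at this
      left
      obtain ⟨j, hj⟩ := Function.ne_iff.mp hcne
      exact Finset.sum_lt_sum (fun j _ => hle j)
        ⟨j, Finset.mem_univ j, lt_of_le_of_ne (hle j) hj⟩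
  · -- counting
    have hBXd : ∀ β ∈ deltaX A (Set.range α), ∀ j, β j < (A j).card := by
      intro β hβ j
      have h1 := (Finset.mem_filter.mp hβ).1
      have h2 := (Fintype.mem_piFinset.mp h1) j
      exact Finset.mem_range.mp h2
    have heval : ∀ (P : {P : Fin m → F // ∀ i, P i ∈ A i}) (i : Fin r),
        MvPolynomial.eval P.1 (∏ j ∈ S i, (MvPolynomial.X j - MvPolynomial.C (a j))) = 0
          ↔ ∃ j ∈ S i, P.1 j = a j := by
      intro P i
      simp only [map_prod, map_sub, MvPolynomial.eval_X, MvPolynomial.eval_C,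
        Finset.prod_eq_zero_iff, sub_eq_zero]
    refine Finset.card_bij'
      (fun P _ => fun j => ((e j ⟨P.1 j, P.2 j⟩ : Fin (A j).card) : ℕ))
      (fun β hβ => ⟨fun j => ((e j).symm ⟨β j, hBXd β hβ j⟩).1,
        fun j => ((e j).symm ⟨β j, hBXd β hβ j⟩).2⟩) ?_ ?_ ?_ ?_
    · -- forward membership
      intro P hP
      have hP' : ∀ i, ∃ j ∈ S i, P.1 j = a j := by
        intro i
        have := (Finset.mem_filter.mp hP).2 i
        exact (heval P i).mp this
      show (fun j => ((e j ⟨P.1 j, P.2 j⟩ : Fin (A j).card) : ℕ)) ∈ deltaX A (Set.range α)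
      simp only [deltaX, Finset.mem_filter]
      constructor
      · exact Fintype.mem_piFinset.mpr fun j =>
          Finset.mem_range.mpr (e j ⟨P.1 j, P.2 j⟩).isLt
      · rintro ⟨a', ⟨i, rfl⟩, hle⟩
        obtain ⟨j, hjS, hPa⟩ := hP' i
        have h1 : α i j = 1 := (Finset.mem_filter.mp hjS).2
        have h2 := hle j
        rw [h1] at h2
        have h3 : ((e j ⟨P.1 j, P.2 j⟩ : Fin (A j).card) : ℕ) = 0 :=
          (hcoord P j).mpr hPa
        omega
    · -- backward membership
      intro β hβ
      rw [Finset.mem_filter]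
      refine ⟨Finset.mem_univ _, ?_⟩
      intro i
      rw [heval]
      have hno := (Finset.mem_filter.mp hβ).2
      have : ¬ (∀ j, α i j ≤ β j) := fun h => hno ⟨α i, ⟨i, rfl⟩, h⟩
      push_neg at this
      obtain ⟨j, hj⟩ := this
      have h1 : α i j = 1 := by have := (hα i).1 j; omega
      have h2 : β j = 0 := by omega
      refine ⟨j, Finset.mem_filter.mpr ⟨Finset.mem_univ j, h1⟩, ?_⟩
      show ((e j).symm ⟨β j, hBXd β hβ j⟩ : {x // x ∈ A j}).1 = a j
      have h3 : (⟨β j, hBXd β hβ j⟩ : Fin (A j).card) = ⟨0, hpos j⟩ := Fin.ext h2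
      rw [h3, ← he_a j, Equiv.symm_apply_apply]
    · -- left inverse
      intro P hP
      refine Subtype.ext (funext fun j => ?_)
      have h1 : (⟨((e j ⟨P.1 j, P.2 j⟩ : Fin (A j).card) : ℕ), _⟩ : Fin (A j).card)
          = e j ⟨P.1 j, P.2 j⟩ := Fin.ext rfl
      show ((e j).symm _).1 = P.1 j
      rw [h1, Equiv.symm_apply_apply]
    · -- right inverse
      intro β hβ
      funext j
      show ((e j ((e j).symm ⟨β j, hBXd β hβ j⟩)) : ℕ) = β j
      rw [Equiv.apply_symm_apply]
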